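/- (Binary minimum cost formula.) Let 𝒳 = X̂ = {0,1}, X Bernoulli with P_X(0) = p ∈ [0, 1/2], c(x,x̂) = 1{x ≠ x̂}, and D ∈ [0, log 2]. Then min over joint distributions of (X, X̂) with I(X; X̂) ≤ D of E[c(X,X̂)] = h⁻¹(max{h(p) − D, 0}), where h(q) = −q log q − (1−q) log(1−q) and h⁻¹: [0, log 2] → [0, 1/2] is its inverse. -/

import Mathlib

open scoped BigOperators

noncomputable def MI {α β : Type*} [Fintype α] [Fintype β] (p : α → β → ℝ) : ℝ :=
  ∑ a, ∑ b, p a b * Real.log (p a b / ((∑ b', p a b') * (∑ a', p a' b)))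

def IsPMF2 {α β : Type*} [Fintype α] [Fintype β] (p : α → β → ℝ) : Prop :=
  (∀ a b, 0 ≤ p a b) ∧ ∑ a, ∑ b, p a b = 1

/-- Binary entropy function (natural logarithm). -/
noncomputable def binEnt (q : ℝ) : ℝ :=
  -(q * Real.log q) - (1 - q) * Real.log (1 - q)

lemma binEnt_eq (q : ℝ) : binEnt q = Real.binEntropy q := by
  simp [binEnt, Real.binEntropy, Real.log_inv]; ring

lemma term_expand {r P Q : ℝ} (hr : 0 ≤ r) (hP : r ≤ P) (hQ : r ≤ Q) :
    r * Real.log (r / (P * Q)) = r * Real.log r - r * Real.log P - r * Real.log Q := by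
  rcases eq_or_lt_of_le hr with h | h
  · simp [← h]
  · have hP' : 0 < P := h.trans_le hP
    have hQ' : 0 < Q := h.trans_le hQ
    rw [Real.log_div h.ne' (by positivity), Real.log_mul hP'.ne' hQ'.ne']; ring

lemma term_ge {r Q V : ℝ} (hr : 0 ≤ r) (hQ : r ≤ Q) (hV : r ≤ V) :
    r - Q * V ≤ r * Real.log r - r * Real.log Q - r * Real.log V := by
  rcases eq_or_lt_of_le hr with h | h
  · have : 0 ≤ Q * V := mul_nonneg (hr.trans hQ) (hr.trans hV)
    simp [← h]; linarith
  · have hQ' : 0 < Q := h.trans_le hQ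
    have hV' : 0 < V := h.trans_le hV
    have h1 := Real.log_le_sub_one_of_pos (show 0 < Q * V / r by positivity)
    rw [Real.log_div (by positivity) h.ne', Real.log_mul hQ'.ne' hV'.ne'] at h1
    have h2 := mul_le_mul_of_nonneg_left h1 hr
    have h3 : r * (Q * V / r) = Q * V := by field_simp
    nlinarith [h2, h3]

lemma mul_log_mul {w t : ℝ} (hw : 0 ≤ w) (ht : 0 ≤ t) :
    (w * t) * Real.log (w * t) = (w * t) * Real.log w + (w * t) * Real.log t := by
  rcases eq_or_lt_of_le hw with h | h
  · simp [← h]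
  rcases eq_or_lt_of_le ht with h' | h'
  · simp [← h']
  rw [Real.log_mul h.ne' h'.ne']; ring

lemma converse4 (a b c d : ℝ) (ha : 0 ≤ a) (hb : 0 ≤ b) (hc : 0 ≤ c) (hd : 0 ≤ d)
    (hs : a + b + c + d = 1) :
    binEnt (a + b) - binEnt (b + c) ≤
      a * Real.log (a / ((a + b) * (a + c))) + b * Real.log (b / ((a + b) * (b + d)))
      + (c * Real.log (c / ((c + d) * (a + c))) + d * Real.log (d / ((c + d) * (b + d)))) := by
  rw [term_expand ha (by linarith) (by linarith), term_expand hb (by linarith) (by linarith),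
      term_expand hc (by linarith) (by linarith), term_expand hd (by linarith) (by linarith)]
  have h1 := term_ge ha (show a ≤ a + c by linarith) (show a ≤ a + d by linarith)
  have h2 := term_ge hb (show b ≤ b + d by linarith) (show b ≤ b + c by linarith)
  have h3 := term_ge hc (show c ≤ a + c by linarith) (show c ≤ b + c by linarith)
  have h4 := term_ge hd (show d ≤ b + d by linarith) (show d ≤ a + d by linarith)
  have hq : (a + c) * (a + d) + (b + d) * (b + c) + (a + c) * (b + c) + (b + d) * (a + d) = 1 := by
    linear_combination (a + b + c + d + 1) * hs
  have e1 : binEnt (a + b) = -((a + b) * Real.log (a + b)) - (c + d) * Real.log (c + d) := by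
    rw [binEnt, show (1 : ℝ) - (a + b) = c + d by linarith]
  have e2 : binEnt (b + c) = -((b + c) * Real.log (b + c)) - (a + d) * Real.log (a + d) := by
    rw [binEnt, show (1 : ℝ) - (b + c) = a + d by linarith]
  rw [e1, e2]
  ring_nf at h1 h2 h3 h4 hq ⊢
  linarith [h1, h2, h3, h4, hq]

lemma converse_r (p : ℝ) (r : Bool → Bool → ℝ) (hpmf : IsPMF2 r)
    (hrow : ∀ x, ∑ z, r x z = if x then 1 - p else p) :
    binEnt p - binEnt (∑ x, ∑ z, r x z * (if x = z then 0 else 1)) ≤ MI r := by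
  obtain ⟨hnn, hsum⟩ := hpmf
  have ha := hnn false false
  have hb := hnn false true
  have hc := hnn true false
  have hd := hnn true true
  have hrf := hrow false
  have hrt := hrow true
  simp only [Fintype.sum_bool] at hsum hrf hrt
  norm_num at hrf hrt
  simp only [MI, Fintype.sum_bool]
  norm_num
  have key := converse4 (r false false) (r false true) (r true false) (r true true)
    ha hb hc hd (by linarith)
  rw [show p = r false false + r false true from by linarith]
  ring_nf at key ⊢
  linarith [key]

lemma diag_mem (p : ℝ) (h0 : 0 ≤ p) (h2 : p ≤ 1 / 2) :
    ∃ r : Bool → Bool → ℝ, IsPMF2 r ∧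
      (∀ x, ∑ z, r x z = if x then 1 - p else p) ∧ MI r ≤ binEnt p ∧
      (0 : ℝ) = ∑ x, ∑ z, r x z * (if x = z then 0 else 1) := by
  refine ⟨fun (x z : Bool) => if x = z then (if x then 1 - p else p) else 0, ⟨?_, ?_⟩, ?_, ?_, ?_⟩
  · intro a b; dsimp only
    split
    · split <;> linarith
    · exact le_refl 0
  · simp [Fintype.sum_bool]
    try linarith
  · intro x; cases x <;> simp [Fintype.sum_bool]
  · simp [MI, Fintype.sum_bool]
    simp only [binEnt]; linarith
  · simp [Fintype.sum_bool]

lemma chan_mem (p e : ℝ) (hp2 : p ≤ 1 / 2) (he0 : 0 < e) (hep : e ≤ p) (he2 : e < 1 / 2) :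
    ∃ r : Bool → Bool → ℝ, IsPMF2 r ∧
      (∀ x, ∑ z, r x z = if x then 1 - p else p) ∧ MI r ≤ binEnt p - binEnt e ∧
      e = ∑ x, ∑ z, r x z * (if x = z then 0 else 1) := by
  set q : ℝ := (p - e) / (1 - 2 * e) with hqdef
  have hden : (0:ℝ) < 1 - 2 * e := by linarith
  have hq0 : 0 ≤ q := div_nonneg (by linarith) hden.le
  have hq1 : q < 1 := by rw [hqdef, div_lt_one hden]; linarith
  have hqe : q * (1 - e) + (1 - q) * e = p := by
    rw [hqdef]; have := div_mul_cancel₀ (p - e) hden.ne'; linear_combination this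
  have h1q : (0:ℝ) ≤ 1 - q := by linarith
  have h1e : (0:ℝ) ≤ 1 - e := by linarith
  refine ⟨fun (x z : Bool) => (if z then 1 - q else q) * (if x = z then 1 - e else e),
    ⟨?_, ?_⟩, ?_, ?_, ?_⟩
  · intro a b; dsimp only
    exact mul_nonneg (by split <;> linarith) (by split <;> linarith)
  · simp [Fintype.sum_bool]; ring
  · intro x; cases x <;> simp [Fintype.sum_bool] <;> linarith [hqe]
  · have key : MI (fun (x z : Bool) => (if z then 1 - q else q) * (if x = z then 1 - e else e))
        = binEnt p - binEnt e := by
      simp only [MI, Fintype.sum_bool]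
      norm_num
      rw [show (1-q)*(1-e) + q*e = 1-p from by linarith [hqe],
          show (1-q)*e + q*(1-e) = p from by linarith [hqe],
          show (1-q)*(1-e) + (1-q)*e = 1-q from by ring,
          show q*e + q*(1-e) = q from by ring]
      rw [term_expand (by positivity : (0:ℝ) ≤ (1-q)*(1-e)) (by nlinarith) (by nlinarith),
          term_expand (by positivity : (0:ℝ) ≤ q*e) (by nlinarith) (by nlinarith),
          term_expand (by positivity : (0:ℝ) ≤ (1-q)*e) (by nlinarith) (by nlinarith),
          term_expand (by positivity : (0:ℝ) ≤ q*(1-e)) (by nlinarith) (by nlinarith),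
          mul_log_mul h1q h1e, mul_log_mul hq0 he0.le, mul_log_mul h1q he0.le,
          mul_log_mul hq0 h1e]
      simp only [binEnt]
      linear_combination (Real.log (1 - p) - Real.log p) * hqe
    rw [key]
  · simp [Fintype.sum_bool]; linarith [hqe]

theorem stmt17 (p D : ℝ) (hp : p ∈ Set.Icc (0 : ℝ) (1 / 2))
    (hD : D ∈ Set.Icc (0 : ℝ) (Real.log 2)) :
    sInf {v | ∃ r : Bool → Bool → ℝ, IsPMF2 r ∧
        (∀ x, ∑ z, r x z = if x then 1 - p else p) ∧ MI r ≤ D ∧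
        v = ∑ x, ∑ z, r x z * (if x = z then 0 else 1)}
      ∈ Set.Icc (0 : ℝ) (1 / 2) ∧
    binEnt (sInf {v | ∃ r : Bool → Bool → ℝ, IsPMF2 r ∧
        (∀ x, ∑ z, r x z = if x then 1 - p else p) ∧ MI r ≤ D ∧
        v = ∑ x, ∑ z, r x z * (if x = z then 0 else 1)})
      = max (binEnt p - D) 0 := by
  obtain ⟨hp0, hp2⟩ := hp
  obtain ⟨hD0, hD2⟩ := hD
  set S : Set ℝ := {v | ∃ r : Bool → Bool → ℝ, IsPMF2 r ∧
        (∀ x, ∑ z, r x z = if x then 1 - p else p) ∧ MI r ≤ D ∧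
        v = ∑ x, ∑ z, r x z * (if x = z then 0 else 1)} with hSdef
  have hS_nonneg : ∀ v ∈ S, (0:ℝ) ≤ v := by
    rintro v ⟨r, ⟨hnn, _⟩, _, _, rfl⟩
    have := hnn false true
    have := hnn true false
    simp [Fintype.sum_bool]
    positivity
  by_cases hcase : binEnt p ≤ D
  · -- minimum is 0
    obtain ⟨r, hr1, hr2, hr3, hr4⟩ := diag_mem p hp0 hp2
    have hmem : (0:ℝ) ∈ S := ⟨r, hr1, hr2, hr3.trans hcase, hr4⟩
    have hinf : sInf S = 0 :=
      le_antisymm (csInf_le ⟨0, hS_nonneg⟩ hmem) (le_csInf ⟨0, hmem⟩ hS_nonneg)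
    rw [hinf]
    refine ⟨⟨le_refl _, by norm_num⟩, ?_⟩
    rw [max_eq_right (by linarith)]
    simp [binEnt]
  · push_neg at hcase
    have hbp_le : binEnt p ≤ Real.log 2 := by rw [binEnt_eq]; exact Real.binEntropy_le_log_two
    obtain ⟨e, he_mem, he_eq⟩ : ∃ e ∈ Set.Icc (0:ℝ) (1/2), Real.binEntropy e = binEnt p - D := by
      have hiv := intermediate_value_Icc (by norm_num : (0:ℝ) ≤ 1/2)
        (Real.binEntropy_continuous.continuousOn)
      have hx : binEnt p - D ∈ Set.Icc (Real.binEntropy 0) (Real.binEntropy (1/2)) := by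
        rw [Real.binEntropy_zero, show (1/2:ℝ) = 2⁻¹ by norm_num, Real.binEntropy_two_inv]
        exact ⟨by linarith, by linarith⟩
      obtain ⟨e, he1, he2⟩ := hiv hx
      exact ⟨e, he1, he2⟩
    have heB : binEnt e = binEnt p - D := by rw [binEnt_eq]; exact he_eq
    obtain ⟨he0', he2'⟩ := he_mem
    have he0 : 0 < e := by
      rcases eq_or_lt_of_le he0' with h | h
      · exfalso
        have : binEnt e = 0 := by rw [← h]; simp [binEnt]
        linarith
      · exact h
    have hep : e ≤ p := by
      by_contra h
      push_neg at h
      have := Real.binEntropy_strictMonoOn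
        (Set.mem_Icc.mpr ⟨hp0, by norm_num; linarith⟩)
        (Set.mem_Icc.mpr ⟨he0', by norm_num; linarith⟩) h
      rw [← binEnt_eq, ← binEnt_eq] at this
      linarith
    -- membership of e in S
    have hmem : e ∈ S := by
      rcases eq_or_lt_of_le he2' with heq | hlt
      · -- e = 1/2, so p = 1/2; use the uniform distribution
        have hphalf : p = 1/2 := le_antisymm hp2 (by rw [← heq]; exact hep)
        refine ⟨fun (_ _ : Bool) => 1/4, ⟨fun _ _ => by norm_num, by simp [Fintype.sum_bool]; norm_num⟩,
          ?_, ?_, ?_⟩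
        · intro x; cases x <;> simp [Fintype.sum_bool] <;> rw [hphalf] <;> norm_num
        · have : MI (fun (_ _ : Bool) => (1/4 : ℝ)) = 0 := by
            simp [MI, Fintype.sum_bool]
            norm_num
          rw [this]; exact hD0
        · simp [Fintype.sum_bool]; rw [heq]; norm_num
      · obtain ⟨r, hr1, hr2, hr3, hr4⟩ := chan_mem p e hp2 he0 hep hlt
        exact ⟨r, hr1, hr2, by rw [heB] at hr3; linarith, hr4⟩
    -- lower bound
    have hlb : ∀ v ∈ S, e ≤ v := by
      rintro v hv
      obtain ⟨r, hr1, hr2, hr3, hveq⟩ := hv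
      have hconv := converse_r p r hr1 hr2
      rw [← hveq] at hconv
      have hbv : binEnt e ≤ binEnt v := by rw [heB]; linarith
      by_contra h
      push_neg at h
      have hv0 : 0 ≤ v := hS_nonneg v ⟨r, hr1, hr2, hr3, hveq⟩
      have := Real.binEntropy_strictMonoOn
        (Set.mem_Icc.mpr ⟨hv0, by norm_num; linarith⟩)
        (Set.mem_Icc.mpr ⟨he0', by norm_num; linarith⟩) h
      rw [← binEnt_eq, ← binEnt_eq] at this
      linarith
    have hinf : sInf S = e :=
      le_antisymm (csInf_le ⟨e, hlb⟩ hmem) (le_csInf ⟨e, hmem⟩ hlb)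
    rw [hinf]
    refine ⟨⟨he0', he2'⟩, ?_⟩
    rw [max_eq_left (by linarith)]
    exact heB
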